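/- One-step mean-field drift bound: suppose at time t−1 the action α prescribes, for each cluster i, at most N_i arms transitioning independently according to row-stochastic kernels over |S| states, with at most K|S||A| arms deviating (due to rounding) from the prescribed action. Then the ℓ1 distance between the realized empirical next-state count vector and its mean-field (expected) prediction satisfies E[||μ_real − μ_mf||_1] ≤ √(K|S|N) + K|S||A|, where N = Σ_i N_i. -/

import Mathlib

open MeasureTheory ProbabilityTheory Finset

private lemma abs_integral_le_sqrt_sq {Ω : Type*} [MeasureSpace Ω]
    [IsProbabilityMeasure (ℙ : Measure Ω)] {g : Ω → ℝ} (hg : MemLp g 2 ℙ) :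
    (∫ ω, |g ω|) ≤ Real.sqrt (∫ ω, (g ω) ^ 2) := by
  have h1 : (0:ℝ) ≤ variance (|g|) ℙ := variance_nonneg _ _
  rw [variance_eq_sub hg.abs] at h1
  simp only [Pi.pow_apply, Pi.abs_apply, sq_abs] at h1
  exact Real.le_sqrt_of_sq_le (by linarith)

/-- one-step mean-field drift bound: `N` arms, each arm `j` belonging
to a fixed cluster `c j ∈ [K]`, transition independently to random next states
`X j : Ω → S`.  `μmf` is the deterministic mean-field prediction of the next-state
counts; the rounding of the prescribed fractional action causes a bias of at most
`K|S||A|` between `μmf` and the true expected counts.  Then the expected ℓ1 distance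
between the realized empirical counts and `μmf` is at most `√(K|S|N) + K|S||A|`. -/
theorem stmt_17 {Ω : Type*} [MeasureSpace Ω] [IsProbabilityMeasure (ℙ : Measure Ω)]
    {S : Type*} [Fintype S] [DecidableEq S] [MeasurableSpace S] [MeasurableSingletonClass S]
    (K N Acard : ℕ) (c : Fin N → Fin K)
    (X : Fin N → Ω → S)
    (hmeas : ∀ j, Measurable (X j))
    (hindep : iIndepFun X ℙ)
    (μmf : Fin K → S → ℝ)
    (hbias : ∑ i : Fin K, ∑ s : S,
        |μmf i s - ∫ ω, (((Finset.univ.filter (fun j => c j = i ∧ X j ω = s)).card : ℝ))|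
      ≤ (K : ℝ) * Fintype.card S * Acard) :
    (∫ ω, ∑ i : Fin K, ∑ s : S,
        |(((Finset.univ.filter (fun j => c j = i ∧ X j ω = s)).card : ℝ)) - μmf i s|)
      ≤ Real.sqrt ((K : ℝ) * Fintype.card S * N) + (K : ℝ) * Fintype.card S * Acard := by
  classical
  set f : Fin K → S → Ω → ℝ :=
    fun i s ω => (((Finset.univ.filter (fun j => c j = i ∧ X j ω = s)).card : ℝ)) with hf
  set ind : Fin K → S → Fin N → Ω → ℝ :=
    fun i s j ω => if c j = i ∧ X j ω = s then 1 else 0 with hind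
  have hsum : ∀ i s, f i s = ∑ j : Fin N, ind i s j := by
    intro i s
    funext ω
    simp only [hf, hind, Finset.card_filter, Finset.sum_apply]
    push_cast
    rfl
  -- measurability of indicators
  have hindmeas : ∀ i s j, Measurable (ind i s j) := by
    intro i s j
    by_cases h : c j = i
    · have he : ind i s j = fun ω => if X j ω = s then (1:ℝ) else 0 := by
        funext ω; simp [hind, h]
      rw [he]
      exact Measurable.ite (hmeas j (measurableSet_singleton s)) measurable_const
        measurable_const
    · have he : ind i s j = fun _ => (0:ℝ) := by funext ω; simp [hind, h]
      rw [he]; exact measurable_const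
  have hindLp : ∀ i s j, MemLp (ind i s j) 2 ℙ := fun i s j =>
    MemLp.of_bound (hindmeas i s j).aestronglyMeasurable 1
      (Filter.Eventually.of_forall fun ω => by
        simp only [hind, Real.norm_eq_abs]; split <;> norm_num)
  have hindInt : ∀ i s j, Integrable (ind i s j) ℙ := fun i s j =>
    (hindLp i s j).integrable one_le_two
  have hfLp : ∀ i s, MemLp (f i s) 2 ℙ := by
    intro i s
    rw [hsum i s]
    exact memLp_finset_sum' _ (fun j _ => hindLp i s j)
  have hfInt : ∀ i s, Integrable (f i s) ℙ := fun i s => (hfLp i s).integrable one_le_two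
  -- pairwise independence of the indicators within a fixed (i, s)
  have hpair : ∀ i s, Set.Pairwise ↑(Finset.univ : Finset (Fin N))
      (fun j k => IndepFun (ind i s j) (ind i s k) ℙ) := by
    intro i s j _ k _ hjk
    have h1 : IndepFun (X j) (X k) ℙ := hindep.indepFun hjk
    exact h1.comp (φ := fun t => if c j = i ∧ t = s then (1:ℝ) else 0)
      (ψ := fun t => if c k = i ∧ t = s then (1:ℝ) else 0)
      (measurable_of_countable _) (measurable_of_countable _)
  have hvar : ∀ i s, variance (f i s) ℙ = ∑ j : Fin N, variance (ind i s j) ℙ := by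
    intro i s
    rw [hsum i s]
    exact IndepFun.variance_sum (fun j _ => hindLp i s j) (hpair i s)
  -- variance of each indicator is at most its expectation
  have hvar_le : ∀ i s j, variance (ind i s j) ℙ ≤ ∫ ω, ind i s j ω := by
    intro i s j
    have h := variance_le_expectation_sq (μ := ℙ) (hindmeas i s j).aestronglyMeasurable
    have he : (∫ ω, ((ind i s j) ^ 2) ω) = ∫ ω, ind i s j ω := by
      congr 1; funext ω
      simp only [Pi.pow_apply, hind]
      split <;> norm_num
    exact h.trans_eq he
  -- pointwise: indicators over all (i, s) sum to 1
  have hpt : ∀ j ω, (∑ i : Fin K, ∑ s : S, ind i s j ω) = 1 := by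
    intro j ω
    simp [hind, ite_and, Finset.sum_ite_eq]
  -- total sum of expectations equals N
  have hsum_exp : ∑ i : Fin K, ∑ s : S, ∑ j : Fin N, (∫ ω, ind i s j ω) = (N : ℝ) := by
    have e1 : ∑ i : Fin K, ∑ s : S, ∑ j : Fin N, (∫ ω, ind i s j ω)
        = ∑ j : Fin N, ∑ i : Fin K, ∑ s : S, (∫ ω, ind i s j ω) := by
      have a1 : ∀ i : Fin K, ∑ s : S, ∑ j : Fin N, (∫ ω, ind i s j ω)
          = ∑ j : Fin N, ∑ s : S, (∫ ω, ind i s j ω) := fun i => Finset.sum_comm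
      simp_rw [a1]
      exact Finset.sum_comm
    rw [e1]
    have e2 : ∀ j : Fin N, ∑ i : Fin K, ∑ s : S, (∫ ω, ind i s j ω) = 1 := by
      intro j
      have e3 : ∑ i : Fin K, ∑ s : S, (∫ ω, ind i s j ω)
          = ∫ ω, ∑ i : Fin K, ∑ s : S, ind i s j ω := by
        rw [integral_finset_sum _ (fun i _ =>
          integrable_finset_sum _ (fun s _ => hindInt i s j))]
        exact Finset.sum_congr rfl fun i _ =>
          (integral_finset_sum _ (fun s _ => hindInt i s j)).symm
      rw [e3]
      simp_rw [hpt]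
      simp
    simp [e2]
  -- sum of variances is at most N
  have hvarN : ∑ i : Fin K, ∑ s : S, variance (f i s) ℙ ≤ (N : ℝ) := by
    calc ∑ i : Fin K, ∑ s : S, variance (f i s) ℙ
        = ∑ i : Fin K, ∑ s : S, ∑ j : Fin N, variance (ind i s j) ℙ := by
          exact Finset.sum_congr rfl fun i _ => Finset.sum_congr rfl fun s _ => hvar i s
      _ ≤ ∑ i : Fin K, ∑ s : S, ∑ j : Fin N, (∫ ω, ind i s j ω) := by
          gcongr with i _ s _ j _
          exact hvar_le i s j
      _ = (N : ℝ) := hsum_exp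
  -- L1 deviation from mean bounded by sqrt of variance
  have hL1 : ∀ i s, (∫ ω, |f i s ω - ∫ ω', f i s ω'|) ≤ Real.sqrt (variance (f i s) ℙ) := by
    intro i s
    have hg : MemLp (fun ω => f i s ω - ∫ ω', f i s ω') 2 ℙ :=
      (hfLp i s).sub (memLp_const _)
    refine (abs_integral_le_sqrt_sq hg).trans_eq ?_
    congr 1
    rw [variance_eq_integral (hfLp i s).aemeasurable]
  -- Cauchy–Schwarz on the finite sum of square roots
  have hCS : ∑ i : Fin K, ∑ s : S, Real.sqrt (variance (f i s) ℙ)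
      ≤ Real.sqrt ((K : ℝ) * Fintype.card S * N) := by
    refine Real.le_sqrt_of_sq_le ?_
    have e1 : ∑ i : Fin K, ∑ s : S, Real.sqrt (variance (f i s) ℙ)
        = ∑ p : Fin K × S, Real.sqrt (variance (f p.1 p.2) ℙ) := by
      rw [Fintype.sum_prod_type]
    rw [e1]
    calc (∑ p : Fin K × S, Real.sqrt (variance (f p.1 p.2) ℙ)) ^ 2
        ≤ (Finset.univ : Finset (Fin K × S)).card *
            ∑ p : Fin K × S, (Real.sqrt (variance (f p.1 p.2) ℙ)) ^ 2 :=
          sq_sum_le_card_mul_sum_sq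
      _ = ((K : ℝ) * Fintype.card S) * ∑ p : Fin K × S, variance (f p.1 p.2) ℙ := by
          rw [Finset.card_univ]
          simp only [Fintype.card_prod, Fintype.card_fin]
          push_cast
          congr 1
          exact Finset.sum_congr rfl fun p _ => Real.sq_sqrt (variance_nonneg _ _)
      _ ≤ ((K : ℝ) * Fintype.card S) * N := by
          have : ∑ p : Fin K × S, variance (f p.1 p.2) ℙ
              = ∑ i : Fin K, ∑ s : S, variance (f i s) ℙ := by
            rw [Fintype.sum_prod_type]
          rw [this]
          exact mul_le_mul_of_nonneg_left hvarN (by positivity)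
      _ = (K : ℝ) * Fintype.card S * N := by ring
  -- integrable summand for the main integral
  have hIntAbs : ∀ i s, Integrable (fun ω => |f i s ω - μmf i s|) ℙ := fun i s =>
    ((hfInt i s).sub (integrable_const _)).abs
  have hIntAbs2 : ∀ i s, Integrable (fun ω => |f i s ω - ∫ ω', f i s ω'|) ℙ := fun i s =>
    ((hfInt i s).sub (integrable_const _)).abs
  -- main chain
  have emain : (∫ ω, ∑ i : Fin K, ∑ s : S, |f i s ω - μmf i s|)
      = ∑ i : Fin K, ∑ s : S, ∫ ω, |f i s ω - μmf i s| := by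
    rw [integral_finset_sum _ (fun i _ =>
      integrable_finset_sum _ (fun s _ => hIntAbs i s))]
    exact Finset.sum_congr rfl fun i _ =>
      integral_finset_sum _ (fun s _ => hIntAbs i s)
  calc (∫ ω, ∑ i : Fin K, ∑ s : S, |f i s ω - μmf i s|)
      = ∑ i : Fin K, ∑ s : S, ∫ ω, |f i s ω - μmf i s| := emain
    _ ≤ ∑ i : Fin K, ∑ s : S,
          ((∫ ω, |f i s ω - ∫ ω', f i s ω'|) + |μmf i s - ∫ ω', f i s ω'|) := by
        gcongr with i _ s _
        have hmono : (∫ ω, |f i s ω - μmf i s|)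
            ≤ ∫ ω, (|f i s ω - ∫ ω', f i s ω'| + |μmf i s - ∫ ω', f i s ω'|) := by
          refine integral_mono (hIntAbs i s) ((hIntAbs2 i s).add (integrable_const _)) ?_
          intro ω
          show |f i s ω - μmf i s| ≤ |f i s ω - ∫ ω', f i s ω'| + |μmf i s - ∫ ω', f i s ω'|
          have : f i s ω - μmf i s
              = (f i s ω - ∫ ω', f i s ω') - (μmf i s - ∫ ω', f i s ω') := by ring
          rw [this]
          exact abs_sub _ _
        refine hmono.trans_eq ?_
        rw [integral_add (hIntAbs2 i s) (integrable_const _), integral_const]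
        simp
    _ = (∑ i : Fin K, ∑ s : S, ∫ ω, |f i s ω - ∫ ω', f i s ω'|)
        + ∑ i : Fin K, ∑ s : S, |μmf i s - ∫ ω', f i s ω'| := by
        rw [← Finset.sum_add_distrib]
        exact Finset.sum_congr rfl fun i _ => Finset.sum_add_distrib
    _ ≤ Real.sqrt ((K : ℝ) * Fintype.card S * N) + (K : ℝ) * Fintype.card S * Acard := by
        refine add_le_add ?_ ?_
        · calc ∑ i : Fin K, ∑ s : S, ∫ ω, |f i s ω - ∫ ω', f i s ω'|
              ≤ ∑ i : Fin K, ∑ s : S, Real.sqrt (variance (f i s) ℙ) := by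
                gcongr with i _ s _
                exact hL1 i s
            _ ≤ Real.sqrt ((K : ℝ) * Fintype.card S * N) := hCS
        · exact hbias
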